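/- Let λ_i, λ_j > 0 and let a_i ≤ b_i, a_j ≤ b_j, v_i, v_j be real numbers. Set ξ_j := (1/λ_j)·max(v_j − b_j, 0) − (1/λ_j)·max(a_j − v_j, 0) and ξ_i := (1/λ_i)·max(v_i − b_i, 0) − (1/λ_i)·max(a_i − v_i, 0). Then (ξ_j − ξ_i)·(v_j − v_i) ≥ −(λ_j + λ_i)·|ξ_j|·|ξ_i| − (|ξ_j| + |ξ_i|)·(|b_j − b_i| + |a_j − a_i|). -/

import Mathlib

lemma yosida_proj_aux (lam a b v : ℝ) (hlam : 0 < lam) (hab : a ≤ b) :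
    a ≤ v - lam * ((1 / lam) * max (v - b) 0 - (1 / lam) * max (a - v) 0) ∧
    v - lam * ((1 / lam) * max (v - b) 0 - (1 / lam) * max (a - v) 0) ≤ b ∧
    (0 < (1 / lam) * max (v - b) 0 - (1 / lam) * max (a - v) 0 →
      v - lam * ((1 / lam) * max (v - b) 0 - (1 / lam) * max (a - v) 0) = b) ∧
    ((1 / lam) * max (v - b) 0 - (1 / lam) * max (a - v) 0 < 0 →
      v - lam * ((1 / lam) * max (v - b) 0 - (1 / lam) * max (a - v) 0) = a) := by
  have hl : lam ≠ 0 := ne_of_gt hlam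
  rcases le_or_gt v b with hvb | hvb
  · rcases le_or_gt a v with hav | hav
    · have h1 : max (v - b) 0 = 0 := max_eq_right (by linarith)
      have h2 : max (a - v) 0 = 0 := max_eq_right (by linarith)
      rw [h1, h2]
      constructor
      · ring_nf; linarith
      constructor
      · ring_nf; linarith
      constructor <;> intro h <;> nlinarith
    · have h1 : max (v - b) 0 = 0 := max_eq_right (by linarith)
      have h2 : max (a - v) 0 = a - v := max_eq_left (by linarith)
      rw [h1, h2]
      have hξ : (1 / lam) * (0:ℝ) - (1 / lam) * (a - v) < 0 := by
        have : 0 < (1 / lam) * (a - v) := mul_pos (by positivity) (by linarith)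
        linarith
      have hp : v - lam * ((1 / lam) * (0:ℝ) - (1 / lam) * (a - v)) = a := by
        field_simp
        ring
      refine ⟨by rw [hp], by rw [hp]; exact hab, fun h => absurd h (by linarith), fun _ => hp⟩
  · have hav : a ≤ v := le_trans hab (le_of_lt hvb)
    have h1 : max (v - b) 0 = v - b := max_eq_left (by linarith)
    have h2 : max (a - v) 0 = 0 := max_eq_right (by linarith)
    rw [h1, h2]
    have hξ : 0 < (1 / lam) * (v - b) - (1 / lam) * (0:ℝ) := by
      have : 0 < (1 / lam) * (v - b) := mul_pos (by positivity) (by linarith)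
      linarith
    have hp : v - lam * ((1 / lam) * (v - b) - (1 / lam) * (0:ℝ)) = b := by
      field_simp
      ring
    refine ⟨by rw [hp]; exact hab, by rw [hp], fun _ => hp, fun h => absurd h (by linarith)⟩

lemma yosida_cross_aux (ξ p a b a' b' p' : ℝ)
    (hlo : a' ≤ p') (hhi : p' ≤ b')
    (hpos : 0 < ξ → p = b) (hneg : ξ < 0 → p = a) :
    ξ * (p - p') ≥ -|ξ| * (|b - b'| + |a - a'|) := by
  rcases lt_trichotomy ξ 0 with h | h | h
  · rw [hneg h]
    have habs : |ξ| = -ξ := abs_of_neg h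
    have h2 : -|a - a'| ≤ a' - a := by rw [abs_sub_comm]; exact neg_abs_le _
    have h3 : (0:ℝ) ≤ p' - a + |a - a'| := by linarith
    rw [habs]
    nlinarith [mul_nonneg (neg_nonneg.2 h.le) h3,
      mul_nonneg (neg_nonneg.2 h.le) (abs_nonneg (b - b'))]
  · simp [h]
  · rw [hpos h]
    have habs : |ξ| = ξ := abs_of_pos h
    have h2 : -|b - b'| ≤ b - b' := neg_abs_le _
    have h3 : (0:ℝ) ≤ b - p' + |b - b'| := by linarith
    rw [habs]
    nlinarith [mul_nonneg h.le h3, mul_nonneg h.le (abs_nonneg (a - a'))]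

/-- The general lower estimate for the cross term of two Yosida
approximations of subdifferentials of indicator functions of intervals. -/
theorem yosida_cross_term_estimate
    (lam_i lam_j : ℝ) (hlam_i : 0 < lam_i) (hlam_j : 0 < lam_j)
    (a_i b_i a_j b_j v_i v_j : ℝ) (hab_i : a_i ≤ b_i) (hab_j : a_j ≤ b_j) :
    ((1 / lam_j) * max (v_j - b_j) 0 - (1 / lam_j) * max (a_j - v_j) 0 -
        ((1 / lam_i) * max (v_i - b_i) 0 - (1 / lam_i) * max (a_i - v_i) 0)) *
        (v_j - v_i) ≥
      -(lam_j + lam_i) *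
          |(1 / lam_j) * max (v_j - b_j) 0 - (1 / lam_j) * max (a_j - v_j) 0| *
          |(1 / lam_i) * max (v_i - b_i) 0 - (1 / lam_i) * max (a_i - v_i) 0| -
        (|(1 / lam_j) * max (v_j - b_j) 0 - (1 / lam_j) * max (a_j - v_j) 0| +
            |(1 / lam_i) * max (v_i - b_i) 0 - (1 / lam_i) * max (a_i - v_i) 0|) *
          (|b_j - b_i| + |a_j - a_i|) := by
  set ξj := (1 / lam_j) * max (v_j - b_j) 0 - (1 / lam_j) * max (a_j - v_j) 0 with hξj
  set ξi := (1 / lam_i) * max (v_i - b_i) 0 - (1 / lam_i) * max (a_i - v_i) 0 with hξi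
  obtain ⟨hj1, hj2, hj3, hj4⟩ := yosida_proj_aux lam_j a_j b_j v_j hlam_j hab_j
  obtain ⟨hi1, hi2, hi3, hi4⟩ := yosida_proj_aux lam_i a_i b_i v_i hlam_i hab_i
  set pj := v_j - lam_j * ξj with hpj
  set pi := v_i - lam_i * ξi with hpi
  have c1 : ξj * (pj - pi) ≥ -|ξj| * (|b_j - b_i| + |a_j - a_i|) :=
    yosida_cross_aux ξj pj a_j b_j a_i b_i pi hi1 hi2 hj3 hj4
  have c2 : ξi * (pi - pj) ≥ -|ξi| * (|b_i - b_j| + |a_i - a_j|) :=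
    yosida_cross_aux ξi pi a_i b_i a_j b_j pj hj1 hj2 hi3 hi4
  rw [abs_sub_comm b_i b_j, abs_sub_comm a_i a_j] at c2
  have cmul : ξj * ξi ≤ |ξj| * |ξi| := by
    rw [← abs_mul]; exact le_abs_self _
  have hsq_j : 0 ≤ lam_j * ξj ^ 2 := by positivity
  have hsq_i : 0 ≤ lam_i * ξi ^ 2 := by positivity
  have hv : v_j - v_i = (pj - pi) + lam_j * ξj - lam_i * ξi := by
    rw [hpj, hpi]; ring
  have key : (ξj - ξi) * (v_j - v_i) =
      ξj * (pj - pi) + ξi * (pi - pj) + lam_j * ξj ^ 2 + lam_i * ξi ^ 2 -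
        (lam_j + lam_i) * (ξj * ξi) := by
    rw [hpj, hpi]; ring
  have cmul' := mul_le_mul_of_nonneg_left cmul (le_of_lt (add_pos hlam_j hlam_i))
  clear_value pj pi
  clear_value ξj ξi
  clear hξj hξi hpj hpi hj3 hj4 hi3 hi4 hv
  rw [ge_iff_le, key]
  nlinarith [c1, c2, cmul', hsq_j, hsq_i]
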